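/- For a simplicial complex K ≠ Δ_[m] on [m] with m ≥ 2, the h-vector of the Bier sphere Bier(K) satisfies h_p(Bier(K)) = 1 + (f_0 + ... + f_{p-2}) + f_{p-1} − (f_{m-p-1} + ... + f_{m-2}) expressed precisely as: h_p(Bier(K)) = Σ_{i=0}^{p} f_{i-1}(K) − Σ_{i=m-p}^{m-1} f_{i-1}(K), for 0 ≤ p ≤ m-1, where f-numbers of Bier(K) are f_{j-1}(Bier(K)) = Σ over pairs (I,J) with I ∈ K, J ∈ K^∨ (viewed in disjoint copies of [m]), I∩J=∅, |I|+|J| = j. -/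

import Mathlib

open Finset Polynomial

/-- A (nonempty) abstract simplicial complex on the vertex set `Fin m`. -/
def IsSimplicialComplex {m : ℕ} (K : Finset (Finset (Fin m))) : Prop :=
  ∅ ∈ K ∧ ∀ σ ∈ K, ∀ τ ⊆ σ, τ ∈ K

/-- `faceNum K j` is the number of faces of `K` of cardinality `j` (this is `f_{j-1}`). -/
def faceNum {m : ℕ} (K : Finset (Finset (Fin m))) (j : ℕ) : ℕ :=
  (K.filter fun s => s.card = j).card

/-- The polynomial `∑_{p=0}^{m-1} f_{p-1} (t-1)^p`; its coefficients form the α-vector. -/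
noncomputable def alphaPoly {m : ℕ} (K : Finset (Finset (Fin m))) : Polynomial ℤ :=
  ∑ p ∈ Finset.range m, Polynomial.C (faceNum K p : ℤ) * (Polynomial.X - 1) ^ p

/-- The combinatorial Alexander dual of `K`. -/
def dualC {m : ℕ} (K : Finset (Finset (Fin m))) : Finset (Finset (Fin m)) :=
  Finset.univ.filter fun σ => σᶜ ∉ K

/-- The link of a face `S` in `K`. -/
def linkC {m : ℕ} (K : Finset (Finset (Fin m))) (S : Finset (Fin m)) :
    Finset (Finset (Fin m)) :=
  Finset.univ.filter fun T => Disjoint T S ∧ T ∪ S ∈ K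

/-- The (non-reduced) Euler characteristic `χ(L) = ∑_{∅≠σ∈L} (-1)^{|σ|-1}`. -/
def eulerChar {m : ℕ} (L : Finset (Finset (Fin m))) : ℤ :=
  ∑ σ ∈ L.filter (· ≠ ∅), (-1 : ℤ) ^ (σ.card - 1)

/-- `f_{j-1}(Bier(K))`: the number of faces `I ⊔ J'` of the Bier sphere of cardinality `j`. -/
def bierFaceNum {m : ℕ} (K : Finset (Finset (Fin m))) (j : ℕ) : ℕ :=
  ((K ×ˢ dualC K).filter fun p => Disjoint p.1 p.2 ∧ p.1.card + p.2.card = j).card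

section Aux

variable {m : ℕ} {K : Finset (Finset (Fin m))}

lemma aux_univ_not_mem (hK : IsSimplicialComplex K) (hKne : K ≠ Finset.univ) :
    (univ : Finset (Fin m)) ∉ K := by
  intro hu
  apply hKne
  rw [Finset.eq_univ_iff_forall]
  intro σ
  exact hK.2 _ hu σ (Finset.subset_univ σ)

lemma aux_card_lt (hK : IsSimplicialComplex K) (hKne : K ≠ Finset.univ)
    {I : Finset (Fin m)} (hI : I ∈ K) : I.card < m := by
  have h1 : I.card ≤ m := by
    have := Finset.card_le_univ I; simpa [Fintype.card_fin] using this
  rcases lt_or_eq_of_le h1 with h | h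
  · exact h
  · exfalso
    have : I = univ := Finset.eq_univ_of_card I (by simp [Fintype.card_fin, h])
    exact aux_univ_not_mem hK hKne (this ▸ hI)

lemma aux_sum_card_fn (hK : IsSimplicialComplex K) (hKne : K ≠ Finset.univ) (g : ℕ → ℕ) :
    ∑ I ∈ K, g I.card = ∑ i ∈ Finset.range m, faceNum K i * g i := by
  rw [← Finset.sum_fiberwise_of_maps_to (g := fun I : Finset (Fin m) => I.card)
    (t := Finset.range m) (fun I hI => Finset.mem_range.2 (aux_card_lt hK hKne hI))
    (fun I => g I.card)]
  apply Finset.sum_congr rfl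
  intro i _
  rw [faceNum]
  rw [Finset.sum_congr rfl (fun I hI => by
    rw [(Finset.mem_filter.1 hI).2])]
  rw [Finset.sum_const, smul_eq_mul]

variable (K) in
/-- The master counting set: pairs `I ⊆ L` with `I ∈ K` and `|I| + d = |L|`. -/
def auxPset (d : ℕ) : Finset (Finset (Fin m) × Finset (Fin m)) :=
  (K ×ˢ univ).filter fun p => p.1 ⊆ p.2 ∧ p.1.card + d = p.2.card

lemma aux_supers_card (I : Finset (Fin m)) (d : ℕ) :
    ((univ : Finset (Finset (Fin m))).filter fun L => I ⊆ L ∧ I.card + d = L.card).card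
      = (m - I.card).choose d := by
  have : (m - I.card).choose d = (Finset.powersetCard d Iᶜ).card := by
    rw [Finset.card_powersetCard, Finset.card_compl, Fintype.card_fin]
  rw [this]
  apply Finset.card_nbij' (fun L => L \ I) (fun S => S ∪ I)
  · intro L hL
    simp only [Finset.mem_coe, Finset.mem_filter, Finset.mem_univ, true_and] at hL
    rw [Finset.mem_coe, Finset.mem_powersetCard]
    constructor
    · intro x hx
      simp only [Finset.mem_sdiff] at hx
      simp [Finset.mem_compl, hx.2]
    · rw [Finset.card_sdiff_of_subset hL.1]; omega
  · intro S hS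
    rw [Finset.mem_coe, Finset.mem_powersetCard] at hS
    have hdisj : Disjoint S I := by
      rw [Finset.disjoint_left]; intro x hx hxI
      have := hS.1 hx; simp [Finset.mem_compl] at this; exact this hxI
    simp only [Finset.mem_coe, Finset.mem_filter, Finset.mem_univ, true_and]
    constructor
    · exact Finset.subset_union_right
    · rw [Finset.card_union_of_disjoint hdisj, hS.2]; ring
  · intro L hL
    simp only [Finset.mem_coe, Finset.mem_filter, Finset.mem_univ, true_and] at hL
    exact Finset.sdiff_union_of_subset hL.1
  · intro S hS
    rw [Finset.mem_coe, Finset.mem_powersetCard] at hS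
    apply Finset.union_sdiff_cancel_right
    rw [Finset.disjoint_left]; intro x hx hxI
    have := hS.1 hx; simp [Finset.mem_compl] at this; exact this hxI

lemma aux_subs_card (L : Finset (Fin m)) (d : ℕ) :
    ((univ : Finset (Finset (Fin m))).filter fun I => I ⊆ L ∧ I.card + d = L.card).card
      = L.card.choose d := by
  rw [← Finset.card_powersetCard d L]
  apply Finset.card_nbij' (fun I => L \ I) (fun S => L \ S)
  · intro I hI
    simp only [Finset.mem_coe, Finset.mem_filter, Finset.mem_univ, true_and] at hI
    rw [Finset.mem_coe, Finset.mem_powersetCard]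
    exact ⟨Finset.sdiff_subset, by rw [Finset.card_sdiff_of_subset hI.1]; omega⟩
  · intro S hS
    rw [Finset.mem_coe, Finset.mem_powersetCard] at hS
    simp only [Finset.mem_coe, Finset.mem_filter, Finset.mem_univ, true_and]
    refine ⟨Finset.sdiff_subset, ?_⟩
    rw [Finset.card_sdiff_of_subset hS.1, hS.2]
    have := Finset.card_le_card hS.1
    omega
  · intro I hI
    simp only [Finset.mem_coe, Finset.mem_filter, Finset.mem_univ, true_and] at hI
    exact Finset.sdiff_sdiff_eq_self hI.1
  · intro S hS
    rw [Finset.mem_coe, Finset.mem_powersetCard] at hS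
    exact Finset.sdiff_sdiff_eq_self hS.1

lemma aux_Pset_card (hK : IsSimplicialComplex K) (hKne : K ≠ Finset.univ) (d : ℕ) :
    (auxPset K d).card = ∑ i ∈ Finset.range m, faceNum K i * (m - i).choose d := by
  rw [← aux_sum_card_fn hK hKne (fun i => (m - i).choose d)]
  rw [Finset.card_eq_sum_card_fiberwise
    (f := Prod.fst) (t := K) (fun p hp => by
      simp only [Finset.mem_coe, auxPset, Finset.mem_filter, Finset.mem_product] at hp
      exact hp.1.1)]
  apply Finset.sum_congr rfl
  intro I hI
  rw [← aux_supers_card I d]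
  apply Finset.card_nbij' (fun p => p.2) (fun L => (I, L))
  · intro p hp
    simp only [Finset.mem_coe, auxPset, Finset.mem_filter, Finset.mem_product] at hp
    obtain ⟨⟨⟨_, _⟩, h1, h2⟩, h3⟩ := hp
    simp only [Finset.mem_coe, Finset.mem_filter, Finset.mem_univ, true_and]
    subst h3
    exact ⟨h1, h2⟩
  · intro L hL
    simp only [Finset.mem_coe, Finset.mem_filter, Finset.mem_univ, true_and] at hL
    simp only [Finset.mem_coe, auxPset, Finset.mem_filter, Finset.mem_product]
    simp [hI, hL.1, hL.2]
  · intro p hp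
    simp only [Finset.mem_coe, Finset.mem_filter, auxPset, Finset.mem_product] at hp
    obtain ⟨_, h3⟩ := hp
    exact Prod.ext h3.symm rfl
  · intro L _
    rfl

lemma aux_Pset_in_card (hK : IsSimplicialComplex K) (hKne : K ≠ Finset.univ) (d : ℕ) :
    ((auxPset K d).filter fun p => p.2 ∈ K).card
      = ∑ l ∈ Finset.range m, faceNum K l * l.choose d := by
  rw [← aux_sum_card_fn hK hKne (fun l => l.choose d)]
  rw [Finset.card_eq_sum_card_fiberwise
    (f := Prod.snd) (t := K) (fun p hp => by
      simp only [Finset.mem_coe, auxPset, Finset.mem_filter, Finset.mem_product] at hp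
      exact hp.2)]
  apply Finset.sum_congr rfl
  intro L hL
  rw [← aux_subs_card L d]
  apply Finset.card_nbij' (fun p => p.1) (fun I => (I, L))
  · intro p hp
    simp only [Finset.mem_coe, auxPset, Finset.mem_filter, Finset.mem_product] at hp
    obtain ⟨⟨⟨_, h1, h2⟩, _⟩, h3⟩ := hp
    subst h3
    simp only [Finset.mem_coe, Finset.mem_filter, Finset.mem_univ, true_and]
    exact ⟨h1, h2⟩
  · intro I hI
    simp only [Finset.mem_coe, Finset.mem_filter, Finset.mem_univ, true_and] at hI
    simp only [Finset.mem_coe, auxPset, Finset.mem_filter, Finset.mem_product]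
    simp [hK.2 L hL I hI.1, hI.1, hI.2, hL]
  · intro p hp
    simp only [Finset.mem_coe, auxPset, Finset.mem_filter, Finset.mem_product] at hp
    exact Prod.ext rfl hp.2.symm
  · intro I _
    rfl

lemma aux_Pset_out_card (k : ℕ) (hk : k < m) :
    ((auxPset K (m - k)).filter fun p => p.2 ∉ K).card = bierFaceNum K k := by
  rw [bierFaceNum]
  apply Finset.card_nbij' (fun p => (p.1, p.2ᶜ)) (fun p => (p.1, p.2ᶜ))
  · intro p hp
    simp only [Finset.mem_coe, auxPset, Finset.mem_filter, Finset.mem_product] at hp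
    obtain ⟨⟨⟨h1, _⟩, h2, h3⟩, h4⟩ := hp
    simp only [Finset.mem_coe, Finset.mem_filter, Finset.mem_product, dualC, Finset.mem_univ, true_and,
      compl_compl]
    have hc2 : p.2.card ≤ m := by
      have := Finset.card_le_univ p.2; simpa [Fintype.card_fin] using this
    refine ⟨⟨h1, h4⟩, ?_, ?_⟩
    · rw [Finset.disjoint_left]
      intro x hx hxc
      exact (Finset.mem_compl.1 hxc) (h2 hx)
    · rw [Finset.card_compl, Fintype.card_fin]
      omega
  · intro p hp
    simp only [Finset.mem_coe, Finset.mem_filter, Finset.mem_product, dualC, Finset.mem_univ, true_and] at hp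
    obtain ⟨⟨h1, h4⟩, h2, h3⟩ := hp
    have hc2 : p.2.card ≤ m := by
      have := Finset.card_le_univ p.2; simpa [Fintype.card_fin] using this
    simp only [Finset.mem_coe, auxPset, Finset.mem_filter, Finset.mem_product, compl_compl, Finset.mem_univ,
      and_true, true_and]
    refine ⟨⟨h1, ?_, ?_⟩, h4⟩
    · intro x hx
      rw [Finset.mem_compl]
      exact Finset.disjoint_left.1 h2 hx
    · rw [Finset.card_compl, Fintype.card_fin]
      omega
  · intro p _; simp
  · intro p _; simp

/-- The key counting identity. -/
lemma aux_count (hK : IsSimplicialComplex K) (hKne : K ≠ Finset.univ)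
    (k : ℕ) (hk : k < m) :
    (bierFaceNum K k : ℤ)
      = (∑ i ∈ Finset.range m, (faceNum K i : ℤ) * ((m - i).choose (m - k) : ℤ))
        - ∑ i ∈ Finset.range m, (faceNum K i : ℤ) * ((i).choose (m - k) : ℤ) := by
  have hnat : (∑ l ∈ Finset.range m, faceNum K l * l.choose (m - k)) + bierFaceNum K k
      = ∑ i ∈ Finset.range m, faceNum K i * (m - i).choose (m - k) := by
    rw [← aux_Pset_in_card hK hKne (m - k), ← aux_Pset_out_card k hk,
      ← aux_Pset_card hK hKne (m - k)]
    exact Finset.card_filter_add_card_filter_not _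
  have := congrArg (fun n : ℕ => (n : ℤ)) hnat
  push_cast at this ⊢
  linarith

lemma aux_Gsum (m n : ℕ) (hn : n ≤ m) :
    ∑ k ∈ Finset.range m, Polynomial.C ((n.choose (m - k) : ℤ))
        * (Polynomial.X - 1) ^ (m - k) = Polynomial.X ^ n - 1 := by
  set g : ℕ → Polynomial ℤ := fun k => Polynomial.C ((n.choose k : ℤ)) * (Polynomial.X - 1) ^ k
    with hg
  have h1 : ∑ k ∈ Finset.range m, g (m - k) = ∑ j ∈ Finset.range m, g (j + 1) := by
    rw [← Finset.sum_range_reflect (fun k => g (m - k)) m]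
    apply Finset.sum_congr rfl
    intro j hj
    congr 1
    rw [Finset.mem_range] at hj
    omega
  have h2 : ∑ j ∈ Finset.range (m + 1), g j = (∑ j ∈ Finset.range m, g (j + 1)) + g 0 :=
    Finset.sum_range_succ' g m
  have h3 : ∑ j ∈ Finset.range (m + 1), g j = ∑ j ∈ Finset.range (n + 1), g j := by
    symm
    apply Finset.sum_subset
    · intro x hx
      rw [Finset.mem_range] at *
      omega
    · intro x _ hx
      rw [Finset.mem_range, not_lt] at hx
      simp [hg, Nat.choose_eq_zero_of_lt (by omega : n < x)]
  have h4 : ∑ j ∈ Finset.range (n + 1), g j = Polynomial.X ^ n := by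
    have := add_pow (Polynomial.X - 1) (1 : Polynomial ℤ) n
    simp only [sub_add_cancel, one_pow, mul_one] at this
    rw [this]
    apply Finset.sum_congr rfl
    intro k _
    simp [hg, mul_comm, Polynomial.C_eq_natCast]
  have h5 : g 0 = 1 := by simp [hg]
  calc ∑ k ∈ Finset.range m, Polynomial.C ((n.choose (m - k) : ℤ)) * (Polynomial.X - 1) ^ (m - k)
      = ∑ k ∈ Finset.range m, g (m - k) := rfl
    _ = ∑ j ∈ Finset.range m, g (j + 1) := h1
    _ = ∑ j ∈ Finset.range (m + 1), g j - g 0 := by rw [h2]; ring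
    _ = Polynomial.X ^ n - 1 := by rw [h3, h4, h5]

lemma aux_Tgeom (m i : ℕ) (hm : 1 ≤ m) :
    (∑ p ∈ Finset.Icc i (m - 1), (Polynomial.X : Polynomial ℤ) ^ (m - 1 - p))
      * (Polynomial.X - 1) = Polynomial.X ^ (m - i) - 1 := by
  have h0 : Finset.Icc i (m - 1) = Finset.Ico i m := by
    ext x; simp only [Finset.mem_Icc, Finset.mem_Ico]; omega
  rw [h0, Finset.sum_Ico_eq_sum_range]
  have h1 : ∑ q ∈ Finset.range (m - i), (Polynomial.X : Polynomial ℤ) ^ (m - 1 - (i + q))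
      = ∑ q ∈ Finset.range (m - i), (Polynomial.X : Polynomial ℤ) ^ q := by
    rw [← Finset.sum_range_reflect (fun q => (Polynomial.X : Polynomial ℤ) ^ q) (m - i)]
    apply Finset.sum_congr rfl
    intro q hq
    rw [Finset.mem_range] at hq
    congr 1
    omega
  rw [h1, geom_sum_mul]

end Aux

theorem stmt10 {m : ℕ} (hm : 2 ≤ m) (K : Finset (Finset (Fin m)))
    (hK : IsSimplicialComplex K) (hKne : K ≠ Finset.univ)
    (h : ℕ → ℤ)
    (hdef : ∑ k ∈ Finset.range m, Polynomial.C (h k) * Polynomial.X ^ (m - 1 - k) =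
      ∑ k ∈ Finset.range m,
        Polynomial.C (bierFaceNum K k : ℤ) * (Polynomial.X - 1) ^ (m - 1 - k))
    (p : ℕ) (hp : p ≤ m - 1) :
    h p = ∑ i ∈ Finset.range (p + 1), (faceNum K i : ℤ) -
      ∑ i ∈ Finset.Icc (m - p) (m - 1), (faceNum K i : ℤ) := by
  set H : ℕ → ℤ := fun q => (∑ i ∈ Finset.range (q + 1), (faceNum K i : ℤ)) -
      ∑ i ∈ Finset.Icc (m - q) (m - 1), (faceNum K i : ℤ) with hH
  have hm1 : 1 ≤ m := by omega
  -- common value of both sides times (X - 1)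
  set W : Polynomial ℤ := ∑ i ∈ Finset.range m, Polynomial.C ((faceNum K i : ℤ)) *
      ((Polynomial.X ^ (m - i) - 1) - (Polynomial.X ^ i - 1)) with hW
  -- Bier side
  have hBier : (∑ k ∈ Finset.range m,
      Polynomial.C (bierFaceNum K k : ℤ) * (Polynomial.X - 1) ^ (m - 1 - k))
        * (Polynomial.X - 1) = W := by
    rw [Finset.sum_mul]
    have step1 : ∀ k ∈ Finset.range m,
        Polynomial.C (bierFaceNum K k : ℤ) * (Polynomial.X - 1) ^ (m - 1 - k)
          * (Polynomial.X - 1)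
        = Polynomial.C (bierFaceNum K k : ℤ) * (Polynomial.X - 1) ^ (m - k) := by
      intro k hk
      rw [Finset.mem_range] at hk
      rw [mul_assoc, ← pow_succ]
      congr 2
      omega
    rw [Finset.sum_congr rfl step1]
    have step2 : ∀ k ∈ Finset.range m,
        Polynomial.C (bierFaceNum K k : ℤ) * (Polynomial.X - 1) ^ (m - k)
        = (∑ i ∈ Finset.range m, Polynomial.C ((faceNum K i : ℤ)) *
            (Polynomial.C (((m - i).choose (m - k) : ℤ)) * (Polynomial.X - 1) ^ (m - k)))
          - ∑ i ∈ Finset.range m, Polynomial.C ((faceNum K i : ℤ)) *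
            (Polynomial.C ((i.choose (m - k) : ℤ)) * (Polynomial.X - 1) ^ (m - k)) := by
      intro k hk
      rw [Finset.mem_range] at hk
      rw [aux_count hK hKne k hk]
      rw [map_sub, map_sum, map_sum, sub_mul, Finset.sum_mul, Finset.sum_mul]
      refine congrArg₂ (· - ·) ?_ ?_ <;> (apply Finset.sum_congr rfl; intro i _; rw [map_mul]; ring)
    rw [Finset.sum_congr rfl step2, Finset.sum_sub_distrib, Finset.sum_comm, Finset.sum_comm
      (s := Finset.range m) (t := Finset.range m)
      (f := fun k i => Polynomial.C ((faceNum K i : ℤ)) *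
            (Polynomial.C ((i.choose (m - k) : ℤ)) * (Polynomial.X - 1) ^ (m - k)))]
    rw [hW, ← Finset.sum_sub_distrib]
    apply Finset.sum_congr rfl
    intro i hi
    rw [Finset.mem_range] at hi
    rw [← Finset.mul_sum, ← Finset.mul_sum, ← mul_sub]
    congr 1
    rw [aux_Gsum m (m - i) (by omega), aux_Gsum m i (by omega)]
  -- h-vector side
  have hHside : (∑ q ∈ Finset.range m, Polynomial.C (H q) * Polynomial.X ^ (m - 1 - q))
        * (Polynomial.X - 1) = W := by
    rw [Finset.sum_mul]
    have step1 : ∀ q ∈ Finset.range m,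
        Polynomial.C (H q) * Polynomial.X ^ (m - 1 - q) * (Polynomial.X - 1)
        = (∑ i ∈ Finset.range (q + 1), Polynomial.C ((faceNum K i : ℤ)) *
              (Polynomial.X ^ (m - 1 - q) * (Polynomial.X - 1)))
          - ∑ i ∈ Finset.Icc (m - q) (m - 1), Polynomial.C ((faceNum K i : ℤ)) *
              (Polynomial.X ^ (m - 1 - q) * (Polynomial.X - 1)) := by
      intro q _
      rw [hH]
      simp only [map_sub, map_sum, sub_mul, Finset.sum_mul]
      refine congrArg₂ (· - ·) ?_ ?_ <;> (apply Finset.sum_congr rfl; intro i _; ring)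
    rw [Finset.sum_congr rfl step1, Finset.sum_sub_distrib]
    have swap1 : ∑ q ∈ Finset.range m, ∑ i ∈ Finset.range (q + 1),
          Polynomial.C ((faceNum K i : ℤ)) * (Polynomial.X ^ (m - 1 - q) * (Polynomial.X - 1))
        = ∑ i ∈ Finset.range m, Polynomial.C ((faceNum K i : ℤ)) *
            (Polynomial.X ^ (m - i) - 1) := by
      rw [Finset.sum_comm' (s' := fun i => Finset.Icc i (m - 1)) (t' := Finset.range m)
        (by intro q i; simp only [Finset.mem_range, Finset.mem_Icc]; omega)]
      apply Finset.sum_congr rfl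
      intro i _
      rw [← Finset.mul_sum]
      congr 1
      rw [← aux_Tgeom m i hm1, Finset.sum_mul]
    have swap2 : ∑ q ∈ Finset.range m, ∑ i ∈ Finset.Icc (m - q) (m - 1),
          Polynomial.C ((faceNum K i : ℤ)) * (Polynomial.X ^ (m - 1 - q) * (Polynomial.X - 1))
        = ∑ i ∈ Finset.range m, Polynomial.C ((faceNum K i : ℤ)) *
            (Polynomial.X ^ i - 1) := by
      rw [Finset.sum_comm' (s' := fun i => Finset.Icc (m - i) (m - 1)) (t' := Finset.range m)
        (by intro q i; simp only [Finset.mem_range, Finset.mem_Icc]; omega)]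
      apply Finset.sum_congr rfl
      intro i hi
      rw [Finset.mem_range] at hi
      rw [← Finset.mul_sum]
      congr 1
      have := aux_Tgeom m (m - i) hm1
      rw [(by omega : m - (m - i) = i)] at this
      rw [← this, Finset.sum_mul]
    rw [swap1, swap2, hW, ← Finset.sum_sub_distrib]
    apply Finset.sum_congr rfl
    intro i _
    ring
  -- conclude equality of polynomials
  have hX1 : (Polynomial.X - 1 : Polynomial ℤ) ≠ 0 := by
    simpa using Polynomial.X_sub_C_ne_zero (1 : ℤ)
  have hpoly : ∑ k ∈ Finset.range m, Polynomial.C (h k) * Polynomial.X ^ (m - 1 - k)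
      = ∑ q ∈ Finset.range m, Polynomial.C (H q) * Polynomial.X ^ (m - 1 - q) := by
    apply mul_right_cancel₀ hX1
    rw [hHside, ← hBier, ← hdef]
  -- extract coefficient m - 1 - p
  have hcoeff := congrArg (fun f : Polynomial ℤ => f.coeff (m - 1 - p)) hpoly
  simp only [Polynomial.finset_sum_coeff, Polynomial.coeff_C_mul,
    Polynomial.coeff_X_pow] at hcoeff
  have hmem : p ∈ Finset.range m := Finset.mem_range.2 (by omega)
  have extract : ∀ g : ℕ → ℤ,
      (∑ k ∈ Finset.range m, g k * (if (m - 1 - p) = (m - 1 - k) then (1:ℤ) else 0)) = g p := by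
    intro g
    rw [Finset.sum_eq_single p]
    · simp
    · intro k hk hkp
      rw [Finset.mem_range] at hk
      rw [if_neg (by omega), mul_zero]
    · intro hc
      exact absurd hmem hc
  rw [extract h, extract H] at hcoeff
  exact hcoeff
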